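/- Let V be a 2n-dimensional real vector space, ω a symplectic form on V, and S the generalized complex structure on V given by S X = ι_X ω for X ∈ V and S α = −ω⁻¹(α) for α ∈ V*. Then S induces the canonical orientation of V ⊕ V* if and only if n is an even number. -/

import Mathlib

open Matrix in
/-- The determinant of a real block matrix `[[A, B], [-B, A]]` is nonnegative. -/
lemma aux_det_fromBlocks_nonneg {m : Type*} [Fintype m] [DecidableEq m]
    (A B : Matrix m m ℝ) : 0 ≤ (fromBlocks A B (-B) A).det := by
  set f : ℝ →+* ℂ := Complex.ofRealHom with hf
  set A' : Matrix m m ℂ := A.map f with hA'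
  set B' : Matrix m m ℂ := B.map f with hB'
  set C : Matrix m m ℂ := A' + Complex.I • B' with hC
  set C' : Matrix m m ℂ := A' - Complex.I • B' with hC'
  set U : Matrix (m ⊕ m) (m ⊕ m) ℂ := fromBlocks 1 (Complex.I • 1) (Complex.I • 1) 1 with hU
  have hBneg : (-B).map ⇑f = -B' := by ext i j; simp [hB', f]
  have hMU : (fromBlocks A B (-B) A).map f * U = U * fromBlocks C 0 0 C' := by
    rw [hU, Matrix.fromBlocks_map, Matrix.fromBlocks_multiply, Matrix.fromBlocks_multiply, hBneg]
    simp only [Matrix.mul_one, Matrix.one_mul, Matrix.mul_zero, Matrix.zero_mul,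
      Matrix.mul_smul, Matrix.smul_mul, Matrix.neg_mul, smul_smul, Complex.I_mul_I,
      hC, hC', smul_add, smul_sub, neg_one_smul, ← hA', ← hB']
    ext (i|i) (j|j) <;>
      simp only [Matrix.fromBlocks_apply₁₁, Matrix.fromBlocks_apply₁₂,
        Matrix.fromBlocks_apply₂₁, Matrix.fromBlocks_apply₂₂, Matrix.add_apply,
        Matrix.smul_apply, Matrix.sub_apply, Matrix.neg_apply, Matrix.zero_apply,
        smul_eq_mul] <;> ring
  have hdetU : U.det ≠ 0 := by
    rw [hU, Matrix.det_fromBlocks_one₁₁]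
    have : (1 : Matrix m m ℂ) - Complex.I • 1 * Complex.I • 1 = (2 : ℂ) • 1 := by
      rw [Matrix.smul_mul, Matrix.mul_smul, smul_smul, Complex.I_mul_I, Matrix.one_mul]
      ext i j
      by_cases h : i = j <;> simp [Matrix.one_apply, h, Matrix.smul_apply]
      ring
    rw [this, Matrix.det_smul, Matrix.det_one, mul_one]
    exact pow_ne_zero _ two_ne_zero
  have hdet : f (fromBlocks A B (-B) A).det = C.det * C'.det := by
    have h1 := congrArg Matrix.det hMU
    rw [Matrix.det_mul, Matrix.det_mul, Matrix.det_fromBlocks_zero₂₁] at h1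
    have h2 : (fromBlocks A B (-B) A).map ⇑f = f.mapMatrix (fromBlocks A B (-B) A) := rfl
    rw [RingHom.map_det, ← h2]
    rw [mul_comm (U.det)] at h1
    exact mul_right_cancel₀ hdetU h1
  have hC'star : C' = C.map (starRingEnd ℂ) := by
    ext i j
    simp [hC, hC', hA', hB', Matrix.smul_apply, f, Complex.ext_iff]
  have hdetC' : C'.det = (starRingEnd ℂ) C.det := by
    rw [hC'star, RingHom.map_det]; rfl
  rw [hdetC', Complex.mul_conj] at hdet
  have : ((fromBlocks A B (-B) A).det : ℂ) = (Complex.normSq C.det : ℂ) := hdet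
  have h3 : (fromBlocks A B (-B) A).det = Complex.normSq C.det := by exact_mod_cast this
  rw [h3]; exact Complex.normSq_nonneg _

open Matrix in
/-- An invertible real alternating (skew-symmetric) matrix has positive determinant. -/
lemma aux_det_skew_pos {m : Type*} [Fintype m] [DecidableEq m]
    (G : Matrix m m ℝ) (hskew : Gᵀ = -G) (h0 : G.det ≠ 0) : 0 < G.det := by
  by_contra hle
  have hneg : G.det < 0 := lt_of_le_of_ne (not_lt.1 hle) h0
  set φ : ℝ → ℝ := fun t => ((1 - t) • G + t • 1).det with hφ
  have hcont : Continuous φ := by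
    apply Continuous.matrix_det
    exact (((continuous_const.sub continuous_id).smul continuous_const).add
      (continuous_id.smul continuous_const))
  have h0' : φ 0 = G.det := by simp [hφ]
  have h1' : φ 1 = 1 := by simp [hφ]
  have hmem : (0 : ℝ) ∈ Set.Icc (φ 0) (φ 1) := by
    rw [h0', h1']; exact ⟨hneg.le, zero_le_one⟩
  obtain ⟨t, ht, hφt⟩ := intermediate_value_Icc (zero_le_one) hcont.continuousOn hmem
  -- the matrix (1-t)•G + t•1 is singular
  obtain ⟨v, hv, hMv⟩ := Matrix.exists_mulVec_eq_zero_iff.2 hφt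
  have hGskew : ∀ x : m → ℝ, x ⬝ᵥ (G *ᵥ x) = 0 := by
    intro x
    have h1 : x ⬝ᵥ (G *ᵥ x) = (x ᵥ* G) ⬝ᵥ x := Matrix.dotProduct_mulVec x G x
    have h2 : x ᵥ* G = -(G *ᵥ x) := by
      rw [← Matrix.mulVec_transpose, hskew]
      simp [Matrix.neg_mulVec]
    have h3 : x ⬝ᵥ (G *ᵥ x) = -((G *ᵥ x) ⬝ᵥ x) := by rw [h1, h2, neg_dotProduct]
    have h4 : (G *ᵥ x) ⬝ᵥ x = x ⬝ᵥ (G *ᵥ x) := dotProduct_comm _ _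
    linarith
  have hdot := congrArg (fun w => v ⬝ᵥ w) hMv
  simp only [Matrix.add_mulVec, Matrix.smul_mulVec, Matrix.one_mulVec,
    dotProduct_add, dotProduct_smul, smul_eq_mul, dotProduct_zero] at hdot
  rw [hGskew v, mul_zero, zero_add] at hdot
  have hvv : 0 < v ⬝ᵥ v := by
    have hnn : 0 ≤ v ⬝ᵥ v := Finset.sum_nonneg fun i _ => mul_self_nonneg (v i)
    rcases hnn.lt_or_eq with h | h
    · exact h
    · exact absurd (dotProduct_self_eq_zero.1 h.symm) hv
  have ht0 : t = 0 := by
    rcases mul_eq_zero.1 hdot with h | h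
    · exact h
    · exact absurd h hvv.ne'
  rw [ht0, h0'] at hφt
  exact h0 hφt

/-- The interleaving equivalence: `inl i ↦ 2i`, `inr i ↦ 2i+1`. -/
def auxShuffle (m : ℕ) : Fin m ⊕ Fin m ≃ Fin (m + m) where
  toFun p := Sum.elim (fun i : Fin m => (⟨2 * i.1, by omega⟩ : Fin (m + m)))
    (fun i : Fin m => (⟨2 * i.1 + 1, by omega⟩ : Fin (m + m))) p
  invFun k := if h : (k : ℕ) % 2 = 0 then Sum.inl ⟨(k : ℕ) / 2, by have := k.2; omega⟩
    else Sum.inr ⟨(k : ℕ) / 2, by have := k.2; omega⟩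
  left_inv p := by
    rcases p with i | i <;> dsimp only [Sum.elim_inl, Sum.elim_inr]
    · rw [dif_pos (by omega)]
      congr 1
      exact Fin.ext (by simp <;> omega)
    · rw [dif_neg (by omega)]
      congr 1
      exact Fin.ext (by simp <;> omega)
  right_inv k := by
    dsimp only
    by_cases h : (k : ℕ) % 2 = 0
    · rw [dif_pos h]; exact Fin.ext (by simp <;> omega)
    · rw [dif_neg h]; exact Fin.ext (by simp <;> omega)

/-- The riffle permutation `i ↦ 2i` for `i < m`, `m + i ↦ 2i + 1`. -/
def auxRiffle (m : ℕ) : Equiv.Perm (Fin (m + m)) := finSumFinEquiv.symm.trans (auxShuffle m)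

lemma auxRiffle_apply_val (m : ℕ) (k : Fin (m + m)) :
    ((auxRiffle m k : ℕ)) = if (k : ℕ) < m then 2 * (k : ℕ) else 2 * ((k : ℕ) - m) + 1 := by
  rcases lt_or_ge (k : ℕ) m with h | h
  · have hk : k = Fin.castAdd m (⟨(k : ℕ), h⟩ : Fin m) := Fin.ext rfl
    rw [if_pos h, auxRiffle, Equiv.trans_apply, hk, finSumFinEquiv_symm_apply_castAdd]
    simp [auxShuffle]
  · have hk : k = Fin.natAdd m (⟨(k : ℕ) - m, by have := k.2; omega⟩ : Fin m) :=
      Fin.ext (by simp; omega)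
    rw [if_neg (by omega), auxRiffle, Equiv.trans_apply, hk, finSumFinEquiv_symm_apply_natAdd]
    simp [auxShuffle] <;> omega

/-- Equivalence of `Fin b` onto a segment `[a, a+b)` of `Fin N`. -/
def auxSeg (a b N : ℕ) (h : a + b ≤ N) :
    Fin b ≃ {k : Fin N // a ≤ (k : ℕ) ∧ (k : ℕ) < a + b} where
  toFun i := ⟨⟨a + i.1, by omega⟩, by simp <;> omega⟩
  invFun k := ⟨(k.1 : ℕ) - a, by have := k.2; omega⟩
  left_inv i := by ext; simp
  right_inv k := by ext; have := k.2; simp <;> omega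

set_option maxHeartbeats 1000000 in
lemma aux_sign_riffle (m : ℕ) :
    Equiv.Perm.sign (auxRiffle m) = (-1) ^ (m * (m - 1) / 2) := by
  induction m with
  | zero =>
    have : auxRiffle 0 = 1 := Equiv.ext fun x => absurd x.2 (by omega)
    simp [this]
  | succ m ih =>
    have h2 : m + m + 2 = (m + 1) + (m + 1) := by omega
    set ee : Fin (m + m + 2) ≃ Fin ((m + 1) + (m + 1)) := finCongr h2 with hee
    set f0 : Fin (m + m) ≃ {k : Fin (m + m + 2) // 0 ≤ (k : ℕ) ∧ (k : ℕ) < 0 + (m + m)} :=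
      auxSeg 0 (m + m) (m + m + 2) (by omega) with hf0
    set f1 : Fin (m + 2) ≃ {k : Fin (m + m + 2) // m ≤ (k : ℕ) ∧ (k : ℕ) < m + (m + 2)} :=
      auxSeg m (m + 2) (m + m + 2) (by omega) with hf1
    set E : Equiv.Perm (Fin (m + m + 2)) := (auxRiffle m).extendDomain f0 with hE
    set r : Equiv.Perm (Fin (m + m + 2)) := (finRotate (m + 2)).extendDomain f1 with hr
    set sw : Equiv.Perm (Fin (m + m + 2)) :=
      Equiv.swap (⟨m + m, by omega⟩ : Fin (m + m + 2)) ⟨m + m + 1, by omega⟩ with hsw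
    set q : Equiv.Perm (Fin (m + m + 2)) := (Equiv.permCongr ee.symm) (auxRiffle (m + 1)) with hq
    have hqval : ∀ x : Fin (m + m + 2),
        ((q x : Fin (m + m + 2)) : ℕ) =
          if (x : ℕ) < m + 1 then 2 * (x : ℕ) else 2 * ((x : ℕ) - (m + 1)) + 1 := by
      intro x
      rw [hq, Equiv.permCongr_apply, Equiv.symm_symm]
      have h3 : ((ee.symm (auxRiffle (m + 1) (ee x)) : Fin (m + m + 2)) : ℕ)
          = ((auxRiffle (m + 1) (ee x) : Fin ((m + 1) + (m + 1))) : ℕ) := by simp [hee]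
      rw [h3, auxRiffle_apply_val]
      simp [hee]
    have key : q * r = sw * E := by
      ext k
      have hk2 := k.2
      simp only [Equiv.Perm.mul_apply]
      by_cases h1 : (k : ℕ) < m
      · have hrk : r k = k := by
          rw [hr]
          exact Equiv.Perm.extendDomain_apply_not_subtype _ _ (by rintro ⟨hc, -⟩; omega)
        have hEk : ((E k : Fin (m + m + 2)) : ℕ) = 2 * (k : ℕ) := by
          rw [hE, Equiv.Perm.extendDomain_apply_subtype (auxRiffle m) f0 ⟨by omega, by omega⟩,
            hf0]
          simp [auxSeg, auxRiffle_apply_val]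
          omega
        have hswE : sw (E k) = E k := by
          rw [hsw]
          exact Equiv.swap_apply_of_ne_of_ne
            (Fin.ne_of_val_ne (by rw [hEk]; simp; omega))
            (Fin.ne_of_val_ne (by rw [hEk]; simp; omega))
        rw [hrk, hswE, hqval k, hEk, if_pos (by omega : (k : ℕ) < m + 1)]
        try omega
      · -- m ≤ k
        have hrk : ((r k : Fin (m + m + 2)) : ℕ) =
            m + (if (k : ℕ) - m = m + 1 then 0 else ((k : ℕ) - m) + 1) := by
          rw [hr, Equiv.Perm.extendDomain_apply_subtype (finRotate (m + 2)) f1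
            ⟨by omega, by omega⟩, hf1]
          simp only [auxSeg, Equiv.coe_fn_mk, Equiv.coe_fn_symm_mk, finRotate_succ_apply]
          rw [Fin.val_add_one]
          simp [Fin.ext_iff]
          try omega
        have hqrk : ((q (r k) : Fin (m + m + 2)) : ℕ) =
            if ((r k : Fin (m + m + 2)) : ℕ) < m + 1 then 2 * ((r k : Fin (m + m + 2)) : ℕ)
            else 2 * (((r k : Fin (m + m + 2)) : ℕ) - (m + 1)) + 1 := hqval (r k)
        by_cases h2' : (k : ℕ) < m + m
        · have hEk : ((E k : Fin (m + m + 2)) : ℕ) = 2 * ((k : ℕ) - m) + 1 := by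
            rw [hE, Equiv.Perm.extendDomain_apply_subtype (auxRiffle m) f0 ⟨by omega, by omega⟩,
              hf0]
            simp [auxSeg, auxRiffle_apply_val]
            omega
          have hswE : sw (E k) = E k := by
            rw [hsw]
            exact Equiv.swap_apply_of_ne_of_ne
              (Fin.ne_of_val_ne (by rw [hEk]; simp; omega))
              (Fin.ne_of_val_ne (by rw [hEk]; simp; omega))
          rw [hswE, hqrk, hrk, hEk]
          split_ifs <;> omega
        · have hEk : E k = k := by
            rw [hE]
            exact Equiv.Perm.extendDomain_apply_not_subtype _ _ (by rintro ⟨-, hc⟩; omega)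
          by_cases h3' : (k : ℕ) = m + m
          · have hk' : k = (⟨m + m, by omega⟩ : Fin (m + m + 2)) := Fin.ext h3'
            have hrk2 : ((r k : Fin (m + m + 2)) : ℕ) = m + m + 1 := by
              rw [hrk, if_neg (by omega)]; omega
            have hL : ((q (r k) : Fin (m + m + 2)) : ℕ) = m + m + 1 := by
              rw [hqrk, hrk2, if_neg (by omega)]; omega
            have hswEk : sw (E k) = (⟨m + m + 1, by omega⟩ : Fin (m + m + 2)) := by
              rw [hEk, hk', hsw]; exact Equiv.swap_apply_left _ _
            rw [hswEk, hL]
          · have hk' : k = (⟨m + m + 1, by omega⟩ : Fin (m + m + 2)) :=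
              Fin.ext (show (k : ℕ) = m + m + 1 by omega)
            have hrk2 : ((r k : Fin (m + m + 2)) : ℕ) = m := by
              rw [hrk, if_pos (by omega)]
              omega
            have hL : ((q (r k) : Fin (m + m + 2)) : ℕ) = m + m := by
              rw [hqrk, hrk2, if_pos (by omega)]; omega
            have hswEk : sw (E k) = (⟨m + m, by omega⟩ : Fin (m + m + 2)) := by
              rw [hEk, hk', hsw]; exact Equiv.swap_apply_right _ _
            rw [hswEk, hL]
    have hsignq : Equiv.Perm.sign q = Equiv.Perm.sign (auxRiffle (m + 1)) := by
      rw [hq]; exact Equiv.Perm.sign_permCongr _ _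
    have hsignr : Equiv.Perm.sign r = (-1) ^ (m + 1) := by
      rw [hr, Equiv.Perm.sign_extendDomain, sign_finRotate]
      simp
    have hsignE : Equiv.Perm.sign E = (-1) ^ (m * (m - 1) / 2) := by
      rw [hE, Equiv.Perm.sign_extendDomain, ih]
    have hsignsw : Equiv.Perm.sign sw = -1 :=
      Equiv.Perm.sign_swap (by simp [Fin.ext_iff])
    have hmul := congrArg Equiv.Perm.sign key
    rw [Equiv.Perm.sign_mul, Equiv.Perm.sign_mul, hsignq, hsignr, hsignE, hsignsw] at hmul
    have harith : (m + 1) * ((m + 1) - 1) / 2 = m * (m - 1) / 2 + m := by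
      have hb : (m + 1) * ((m + 1) - 1) = m * (m - 1) + 2 * m := by
        rcases m with _ | m'
        · simp
        · simp only [Nat.add_sub_cancel]
          ring
      rw [hb, Nat.add_mul_div_left _ _ (by norm_num : (0:ℕ) < 2)]
    rw [harith]
    have h4 : ((-1 : ℤˣ) ^ (m + 1)) * ((-1 : ℤˣ) ^ (m + 1)) = 1 := by
      rw [← mul_pow]; simp
    have hc : Equiv.Perm.sign (auxRiffle (m + 1))
        = (-1) * (-1) ^ (m * (m - 1) / 2) * ((-1 : ℤˣ)) ^ (m + 1) := by
      calc Equiv.Perm.sign (auxRiffle (m + 1))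
          = Equiv.Perm.sign (auxRiffle (m + 1)) * (((-1 : ℤˣ) ^ (m + 1)) * ((-1) ^ (m + 1))) := by
            rw [h4, mul_one]
        _ = (Equiv.Perm.sign (auxRiffle (m + 1)) * (-1) ^ (m + 1)) * (-1) ^ (m + 1) := by
            rw [mul_assoc]
        _ = (-1 * (-1) ^ (m * (m - 1) / 2)) * (-1) ^ (m + 1) := by rw [hmul]
    rw [hc, pow_add, pow_succ]
    refine Units.ext ?_
    push_cast
    ring

set_option maxHeartbeats 4000000 in
theorem stmt8 {V : Type*} [AddCommGroup V] [Module ℝ V] [FiniteDimensional ℝ V]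
    (n : ℕ) (hdim : Module.finrank ℝ V = 2 * n)
    (ω : V →ₗ[ℝ] V →ₗ[ℝ] ℝ)
    (halt : ∀ x, ω x x = 0)
    (hbij : Function.Bijective fun x : V => (ω x : Module.Dual ℝ V))
    (S : (V × Module.Dual ℝ V) →ₗ[ℝ] (V × Module.Dual ℝ V))
    (hS1 : ∀ x : V, S (x, 0) = (0, ω x))
    (hS2 : ∀ x : V, S (0, ω x) = (-x, 0))
    (e : Module.Basis (Fin (2 * n)) ℝ V) :
    (∀ c : Module.Basis (Fin (4 * n)) ℝ (V × Module.Dual ℝ V),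
      (∀ i : Fin (2 * n),
        c ⟨2 * (i : ℕ) + 1, by have := i.isLt; omega⟩ =
          S (c ⟨2 * (i : ℕ), by have := i.isLt; omega⟩)) →
      c.orientation =
        ((e.prod e.dualBasis).reindex
          (finSumFinEquiv.trans (finCongr (by ring)))).orientation)
    ↔ Even n := by
  classical
  -- setup
  have h44 : 2 * n + 2 * n = 4 * n := by ring
  set ρ : (Fin (2 * n) ⊕ Fin (2 * n)) ≃ Fin (4 * n) :=
    finSumFinEquiv.trans (finCongr h44) with hρ
  set u : (Fin (2 * n) ⊕ Fin (2 * n)) ≃ Fin (4 * n) :=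
    (auxShuffle (2 * n)).trans (finCongr h44) with hu
  set W : V ≃ₗ[ℝ] Module.Dual ℝ V := LinearEquiv.ofBijective ω hbij with hW
  have hWa : ∀ x : V, W x = ω x := fun x => rfl
  -- skew symmetry
  have hskew : ∀ x y : V, ω x y = -(ω y x) := by
    intro x y
    have h := halt (x + y)
    simp only [map_add, LinearMap.add_apply, halt] at h
    linarith
  -- S is a complex structure
  have hS2' : ∀ ξ : Module.Dual ℝ V, S (0, ξ) = (-(W.symm ξ), 0) := by
    intro ξ
    have h1 : ω (W.symm ξ) = ξ := by
      have := W.apply_symm_apply ξ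
      rwa [hWa] at this
    calc S (0, ξ) = S (0, ω (W.symm ξ)) := by rw [h1]
      _ = (-(W.symm ξ), 0) := hS2 _
  have hSS : ∀ p : V × Module.Dual ℝ V, S (S p) = -p := by
    intro p
    obtain ⟨x, ξ⟩ := p
    obtain ⟨y, hy'⟩ := hbij.2 ξ
    have hy : ω y = ξ := hy'
    have hp : (x, ξ) = (x, (0 : Module.Dual ℝ V)) + (0, ω y) := by
      rw [hy]; simp
    rw [hp, map_add, map_add, hS1 x, hS2 y, hS2 x]
    have hny : S (-y, (0 : Module.Dual ℝ V)) = -(S (y, 0)) := by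
      rw [show ((-y, 0) : V × Module.Dual ℝ V) = -(y, (0 : Module.Dual ℝ V)) by simp, map_neg]
    rw [hny, hS1 y]
    apply Prod.ext <;> simp
  -- bases
  set bp : Module.Basis (Fin (2 * n) ⊕ Fin (2 * n)) ℝ (V × Module.Dual ℝ V) :=
    e.prod e.dualBasis with hbp
  set cp : Module.Basis (Fin (2 * n) ⊕ Fin (2 * n)) ℝ (V × Module.Dual ℝ V) :=
    e.prod (e.map W) with hcp
  set b : Module.Basis (Fin (4 * n)) ℝ (V × Module.Dual ℝ V) := bp.reindex ρ with hb
  set c0 : Module.Basis (Fin (4 * n)) ℝ (V × Module.Dual ℝ V) := cp.reindex u with hc0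
  have hcp_inl : ∀ j, cp (Sum.inl j) = (e j, 0) := by
    intro j; rw [hcp]; ext <;> simp
  have hcp_inr : ∀ j, cp (Sum.inr j) = (0, ω (e j)) := by
    intro j; rw [hcp]; ext <;> simp [hWa]
  have hc0u : ∀ p, c0 (u p) = cp p := by
    intro p; rw [hc0]; simp
  have huval_inl : ∀ j : Fin (2 * n), ((u (Sum.inl j) : Fin (4 * n)) : ℕ) = 2 * (j : ℕ) := by
    intro j; rw [hu]; simp [auxShuffle]
  have huval_inr : ∀ j : Fin (2 * n), ((u (Sum.inr j) : Fin (4 * n)) : ℕ) = 2 * (j : ℕ) + 1 := by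
    intro j; rw [hu]; simp [auxShuffle]
  -- the Gram-type matrix of ω
  set G : Matrix (Fin (2 * n)) (Fin (2 * n)) ℝ := fun i j => ω (e j) (e i) with hG
  have hN : bp.toMatrix ⇑cp = Matrix.fromBlocks 1 0 0 G := by
    ext p q
    rcases p with i | i <;> rcases q with j | j
    · rw [Module.Basis.toMatrix_apply, hcp_inl j, Matrix.fromBlocks_apply₁₁, hbp, Module.Basis.prod_repr_inl]
      simp [Matrix.one_apply, Finsupp.single_apply, eq_comm]
    · rw [Module.Basis.toMatrix_apply, hcp_inr j, Matrix.fromBlocks_apply₁₂, hbp, Module.Basis.prod_repr_inl]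
      simp
    · rw [Module.Basis.toMatrix_apply, hcp_inl j, Matrix.fromBlocks_apply₂₁, hbp, Module.Basis.prod_repr_inr]
      simp
    · rw [Module.Basis.toMatrix_apply, hcp_inr j, Matrix.fromBlocks_apply₂₂, hbp, Module.Basis.prod_repr_inr]
      simp [hG, Module.Basis.dualBasis_repr]
  have hdetN : (bp.toMatrix ⇑cp).det = G.det := by
    rw [hN, Matrix.det_fromBlocks_zero₂₁, Matrix.det_one, one_mul]
  have hGne : G.det ≠ 0 := by
    have h1 : IsUnit (bp.det ⇑cp) := bp.isUnit_det cp
    rw [Module.Basis.det_apply, hdetN] at h1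
    exact h1.ne_zero
  have hGskew : G.transpose = -G := by
    ext i j
    simp only [Matrix.transpose_apply, Matrix.neg_apply, hG]
    exact hskew (e i) (e j)
  have hGpos : 0 < G.det := aux_det_skew_pos G hGskew hGne
  -- sign of the shuffle permutation
  set σ0 : Equiv.Perm (Fin (4 * n)) := u.symm.trans ρ with hσ0
  have hσsign : Equiv.Perm.sign σ0 = (-1) ^ n := by
    have hconj : σ0 = (finCongr h44).permCongr ((auxRiffle (2 * n)).symm) :=
      Equiv.ext fun k => rfl
    rw [hconj, Equiv.Perm.sign_permCongr, Equiv.Perm.sign_symm, aux_sign_riffle]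
    have hexp : 2 * n * (2 * n - 1) / 2 = n * (2 * n - 1) := by
      rw [mul_assoc]
      exact Nat.mul_div_cancel_left _ (by norm_num)
    rw [hexp, pow_mul]
    rcases Nat.even_or_odd n with hn | hn
    · rw [hn.neg_one_pow, one_pow]
    · have hodd : Odd (2 * n - 1) := by
        obtain ⟨k, hk⟩ := hn; exact ⟨2 * k, by omega⟩
      rw [hn.neg_one_pow, hodd.neg_one_pow]
  -- the central determinant formula for adapted bases
  have main : ∀ c : Module.Basis (Fin (4 * n)) ℝ (V × Module.Dual ℝ V),
      (∀ i : Fin (2 * n),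
        c ⟨2 * (i : ℕ) + 1, by have := i.isLt; omega⟩ =
          S (c ⟨2 * (i : ℕ), by have := i.isLt; omega⟩)) →
      ∃ t : ℝ, 0 < t ∧ b.det ⇑c = (-1) ^ n * t := by
    intro c hc
    have hc' : ∀ j : Fin (2 * n), c (u (Sum.inr j)) = S (c (u (Sum.inl j))) := by
      intro j
      have h1 : u (Sum.inr j) = ⟨2 * (j : ℕ) + 1, by have := j.isLt; omega⟩ :=
        Fin.ext (by rw [huval_inr])
      have h2 : u (Sum.inl j) = ⟨2 * (j : ℕ), by have := j.isLt; omega⟩ :=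
        Fin.ext (by rw [huval_inl])
      rw [h1, h2]; exact hc j
    have hSc0 : ∀ j, S (c0 (u (Sum.inl j))) = c0 (u (Sum.inr j)) := by
      intro j
      rw [hc0u, hc0u, hcp_inl, hcp_inr, hS1]
    have hSc0' : ∀ j, S (c0 (u (Sum.inr j))) = -(c0 (u (Sum.inl j))) := by
      intro j
      rw [← hSc0 j, hSS]
    have key1 : ∀ (i : Fin (2 * n)) (x : V × Module.Dual ℝ V),
        c0.repr (S x) (u (Sum.inl i)) = -(c0.repr x (u (Sum.inr i))) := by
      intro i x
      have hmaps :
          (Finsupp.lapply (u (Sum.inl i)) : (Fin (4 * n) →₀ ℝ) →ₗ[ℝ] ℝ).comp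
              ((c0.repr : (V × Module.Dual ℝ V) →ₗ[ℝ] (Fin (4 * n) →₀ ℝ)).comp S)
            = -((Finsupp.lapply (u (Sum.inr i)) : (Fin (4 * n) →₀ ℝ) →ₗ[ℝ] ℝ).comp
              (c0.repr : (V × Module.Dual ℝ V) →ₗ[ℝ] (Fin (4 * n) →₀ ℝ))) := by
        refine Module.Basis.ext c0 fun k => ?_
        obtain ⟨p, rfl⟩ : ∃ p, u p = k := ⟨u.symm k, u.apply_symm_apply k⟩
        simp only [LinearMap.coe_comp, Function.comp_apply, LinearMap.neg_apply,
          Finsupp.lapply_apply, LinearEquiv.coe_coe]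
        rcases p with j | j
        · rw [hSc0 j, Module.Basis.repr_self, Module.Basis.repr_self]
          simp [Finsupp.single_apply, u.injective.eq_iff]
        · rw [hSc0' j, map_neg, Module.Basis.repr_self, Module.Basis.repr_self]
          simp [Finsupp.single_apply, u.injective.eq_iff]
      have := LinearMap.congr_fun hmaps x
      simpa using this
    have key2 : ∀ (i : Fin (2 * n)) (x : V × Module.Dual ℝ V),
        c0.repr (S x) (u (Sum.inr i)) = c0.repr x (u (Sum.inl i)) := by
      intro i x
      have hmaps :
          (Finsupp.lapply (u (Sum.inr i)) : (Fin (4 * n) →₀ ℝ) →ₗ[ℝ] ℝ).comp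
              ((c0.repr : (V × Module.Dual ℝ V) →ₗ[ℝ] (Fin (4 * n) →₀ ℝ)).comp S)
            = (Finsupp.lapply (u (Sum.inl i)) : (Fin (4 * n) →₀ ℝ) →ₗ[ℝ] ℝ).comp
              (c0.repr : (V × Module.Dual ℝ V) →ₗ[ℝ] (Fin (4 * n) →₀ ℝ)) := by
        refine Module.Basis.ext c0 fun k => ?_
        obtain ⟨p, rfl⟩ : ∃ p, u p = k := ⟨u.symm k, u.apply_symm_apply k⟩
        simp only [LinearMap.coe_comp, Function.comp_apply,
          Finsupp.lapply_apply, LinearEquiv.coe_coe]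
        rcases p with j | j
        · rw [hSc0 j, Module.Basis.repr_self, Module.Basis.repr_self]
          simp [Finsupp.single_apply, u.injective.eq_iff]
        · rw [hSc0' j, map_neg, Module.Basis.repr_self, Module.Basis.repr_self]
          simp [Finsupp.single_apply, u.injective.eq_iff]
      have := LinearMap.congr_fun hmaps x
      simpa using this
    set T : Matrix (Fin (4 * n)) (Fin (4 * n)) ℝ := c0.toMatrix ⇑c with hT
    set As : Matrix (Fin (2 * n)) (Fin (2 * n)) ℝ :=
      fun i j => T (u (Sum.inl i)) (u (Sum.inl j)) with hAs
    set Bs : Matrix (Fin (2 * n)) (Fin (2 * n)) ℝ :=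
      fun i j => T (u (Sum.inl i)) (u (Sum.inr j)) with hBs
    have hblocks : T.submatrix ⇑u ⇑u = Matrix.fromBlocks As Bs (-Bs) As := by
      ext p q
      rcases p with i | i <;> rcases q with j | j
      · rfl
      · rfl
      · show T (u (Sum.inr i)) (u (Sum.inl j)) = -(Bs i j)
        rw [hBs]
        show T (u (Sum.inr i)) (u (Sum.inl j)) = -(T (u (Sum.inl i)) (u (Sum.inr j)))
        rw [hT]
        show (c0.toMatrix ⇑c) (u (Sum.inr i)) (u (Sum.inl j))
          = -((c0.toMatrix ⇑c) (u (Sum.inl i)) (u (Sum.inr j)))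
        rw [Module.Basis.toMatrix_apply, Module.Basis.toMatrix_apply, hc' j, key1, neg_neg]
      · show T (u (Sum.inr i)) (u (Sum.inr j)) = As i j
        rw [hAs]
        show T (u (Sum.inr i)) (u (Sum.inr j)) = T (u (Sum.inl i)) (u (Sum.inl j))
        rw [hT]
        show (c0.toMatrix ⇑c) (u (Sum.inr i)) (u (Sum.inr j))
          = (c0.toMatrix ⇑c) (u (Sum.inl i)) (u (Sum.inl j))
        rw [Module.Basis.toMatrix_apply, Module.Basis.toMatrix_apply, hc' j, key2]
    have hdetT : T.det = (Matrix.fromBlocks As Bs (-Bs) As).det := by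
      rw [← hblocks, Matrix.det_submatrix_equiv_self]
    have hTne : T.det ≠ 0 := by
      have h2 : IsUnit (c0.det ⇑c) := c0.isUnit_det c
      rw [Module.Basis.det_apply] at h2
      exact h2.ne_zero
    have hTpos : 0 < T.det := by
      refine lt_of_le_of_ne ?_ (Ne.symm hTne)
      rw [hdetT]
      exact aux_det_fromBlocks_nonneg As Bs
    have hbc0 : b.toMatrix ⇑c0
        = ((bp.toMatrix ⇑cp).submatrix ⇑ρ.symm ⇑ρ.symm).submatrix id ⇑σ0 := by
      ext k l
      simp only [Matrix.submatrix_apply, id_eq]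
      rw [Module.Basis.toMatrix_apply, Module.Basis.toMatrix_apply, hb, Module.Basis.repr_reindex_apply, hc0,
        Module.Basis.reindex_apply]
      have h3 : ρ.symm (σ0 l) = u.symm l := by rw [hσ0]; simp
      rw [h3]
    have hdetbc0 : (b.toMatrix ⇑c0).det = (-1 : ℝ) ^ n * G.det := by
      rw [hbc0, Matrix.det_permute' σ0, Matrix.det_submatrix_equiv_self, hσsign, hdetN]
      norm_num
    refine ⟨G.det * T.det, mul_pos hGpos hTpos, ?_⟩
    rw [Module.Basis.det_apply, ← Module.Basis.toMatrix_mul_toMatrix b c0 ⇑c, Matrix.det_mul, hdetbc0, ← hT]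
    ring
  -- adaptedness of c0
  have hc0adapted : ∀ i : Fin (2 * n),
      c0 ⟨2 * (i : ℕ) + 1, by have := i.isLt; omega⟩ =
        S (c0 ⟨2 * (i : ℕ), by have := i.isLt; omega⟩) := by
    intro i
    have h1 : (⟨2 * (i : ℕ) + 1, by have := i.isLt; omega⟩ : Fin (4 * n)) = u (Sum.inr i) :=
      Fin.ext (by rw [huval_inr])
    have h2 : (⟨2 * (i : ℕ), by have := i.isLt; omega⟩ : Fin (4 * n)) = u (Sum.inl i) :=
      Fin.ext (by rw [huval_inl])
    rw [h1, h2, hc0u, hc0u, hcp_inl, hcp_inr, hS1]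
  -- the flip identity
  have hflip : ∀ c : Module.Basis (Fin (4 * n)) ℝ (V × Module.Dual ℝ V),
      (b.det ⇑c) * (c.det ⇑b) = 1 := by
    intro c
    rw [Module.Basis.det_apply, Module.Basis.det_apply, ← Matrix.det_mul, Module.Basis.toMatrix_mul_toMatrix,
      Module.Basis.toMatrix_self, Matrix.det_one]
  constructor
  · intro hall
    have h2 : c0.orientation = b.orientation := hall c0 hc0adapted
    rw [Module.Basis.orientation_eq_iff_det_pos] at h2
    have h3 : 0 < c0.det ⇑b := h2
    obtain ⟨t, ht, hdet⟩ := main c0 hc0adapted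
    have h1 := hflip c0
    by_contra hodd
    have hoddn : Odd n := Nat.not_even_iff_odd.1 hodd
    rw [hdet, hoddn.neg_one_pow] at h1
    nlinarith
  · intro hn c hc
    have hgoal : c.orientation = b.orientation := by
      rw [Module.Basis.orientation_eq_iff_det_pos]
      obtain ⟨t, ht, hdet⟩ := main c hc
      have h1 := hflip c
      rw [hdet, hn.neg_one_pow, one_mul] at h1
      nlinarith
    exact hgoal
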